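/- Let G be a finite group with a normal Sylow 2-subgroup. If x ∈ G has odd order and is real (conjugate in G to x⁻¹), then x = 1. -/

import Mathlib

/-- In a finite group with a normal Sylow 2-subgroup, every real element of odd
order is trivial. -/
theorem real_odd_order_eq_one_of_normal_sylow {G : Type*} [Group G] [Finite G]
    (S : Sylow 2 G) (hS : (S : Subgroup G).Normal) (x : G)
    (hodd : Odd (orderOf x)) (hx : ∃ g : G, g⁻¹ * x * g = x⁻¹) :
    x = 1 := by
  obtain ⟨g, hg⟩ := hx
  -- work in the quotient Q = G / S
  let Q := G ⧸ (S : Subgroup G)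
  let π : G →* Q := QuotientGroup.mk' (S : Subgroup G)
  set y : Q := π x with hy
  set h : Q := π g with hh
  have hconj : h⁻¹ * y * h = y⁻¹ := by
    have := congrArg π hg
    simpa using this
  -- h has odd order since |Q| = index of Sylow 2 is odd
  have hndvd : ¬ (2 ∣ orderOf h) := by
    intro hdvd
    have h1 : orderOf h ∣ Nat.card Q := orderOf_dvd_natCard h
    have h2 : Nat.card Q = (S : Subgroup G).index := rfl
    exact S.not_dvd_index (hdvd.trans (h2 ▸ h1))
  -- conjugation by h^(2n) fixes y
  have key : ∀ n : ℕ, (h ^ (2 * n))⁻¹ * y * h ^ (2 * n) = y := by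
    intro n
    induction n with
    | zero => simp
    | succ n ih =>
        have : h ^ (2 * (n + 1)) = h ^ (2 * n) * (h * h) := by
          rw [Nat.mul_add, pow_add, pow_two]
        rw [this, mul_inv_rev, mul_inv_rev]
        calc (h⁻¹ * h⁻¹ * (h ^ (2 * n))⁻¹) * y * (h ^ (2 * n) * (h * h))
            = h⁻¹ * (h⁻¹ * ((h ^ (2 * n))⁻¹ * y * h ^ (2 * n)) * h) * h := by
              group
          _ = h⁻¹ * (h⁻¹ * y * h) * h := by rw [ih]
          _ = h⁻¹ * y⁻¹ * h := by rw [hconj]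
          _ = (h⁻¹ * y * h)⁻¹ := by group
          _ = y := by rw [hconj]; exact inv_inv _
  -- order of h is odd: 2m+1
  obtain ⟨m, hm⟩ := (Nat.odd_iff.mpr (by
      rcases Nat.even_or_odd (orderOf h) with he | ho
      · exact absurd he.two_dvd hndvd
      · exact Nat.odd_iff.mp ho))
  have horder : h ^ orderOf h = 1 := pow_orderOf_eq_one h
  have hpow : h ^ (2 * (m + 1)) = h := by
    have : 2 * (m + 1) = orderOf h + 1 := by omega
    rw [this, pow_succ, horder, one_mul]
  have hyy : y = y⁻¹ := by
    have := key (m + 1)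
    rw [hpow] at this
    rw [← hconj, this]
  -- y^2 = 1 and orderOf y odd ⇒ y = 1
  have hy2 : y ^ 2 = 1 := by rw [pow_two]; nth_rewrite 1 [hyy]; simp
  have hdvd2 : orderOf y ∣ 2 := orderOf_dvd_of_pow_eq_one hy2
  have hdvdx : orderOf y ∣ orderOf x := orderOf_map_dvd π x
  have hyodd : Odd (orderOf y) := hodd.of_dvd_nat hdvdx  -- maybe wrong name
  have hy1 : y = 1 := by
    have : orderOf y = 1 := by
      rcases (Nat.prime_two.eq_one_or_self_of_dvd _ hdvd2) with h1 | h2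
      · exact h1
      · exact absurd h2 (by intro h2; rw [h2] at hyodd; exact (Nat.not_odd_iff_even.mpr (by decide)) hyodd)
    exact orderOf_eq_one_iff.mp this
  -- hence x ∈ S
  have hxS : x ∈ (S : Subgroup G) := by
    rwa [hy, QuotientGroup.mk'_apply, QuotientGroup.eq_one_iff] at hy1
  -- x has 2-power order and odd order ⇒ x = 1
  obtain ⟨k, hk⟩ := S.2 ⟨x, hxS⟩
  have hxpow : x ^ (2 ^ k) = 1 := by
    have := congrArg (Subgroup.subtype (S : Subgroup G)) hk
    simpa using this
  have hdvdp : orderOf x ∣ 2 ^ k := orderOf_dvd_of_pow_eq_one hxpow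
  have hcop : Nat.Coprime (orderOf x) (2 ^ k) :=
    Nat.Coprime.pow_right _ ((Nat.coprime_comm.mp
      ((Nat.prime_two.coprime_iff_not_dvd).mpr (by
        intro hd; exact (Nat.not_odd_iff_even.mpr (even_iff_two_dvd.mpr hd)) hodd))))
  exact orderOf_eq_one_iff.mp (Nat.eq_one_of_dvd_coprimes hcop dvd_rfl hdvdp)
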